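/- Let 𝒯 be a triangulated category and let ℐ_1, …, ℐ_r be full triangulated subcategories that are mutually orthogonal, meaning Hom(K, L) = 0 whenever K ∈ ℐ_k, L ∈ ℐ_l and k ≠ l. Then for every n ∈ ℕ ∪ {∞} one has ⟨ℐ_1 ∪ ⋯ ∪ ℐ_r⟩_n = ⟨⟨ℐ_1⟩_n ∪ ⋯ ∪ ⟨ℐ_r⟩_n⟩. -/

import Mathlib

open CategoryTheory Category Limits Pretriangulated

universe v u

namespace RouquierDim

variable {C : Type u} [Category.{v} C] [Preadditive C] [HasZeroObject C]
  [HasShift C ℤ] [∀ n : ℤ, (shiftFunctor C n).Additive] [Pretriangulated C]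
  [HasBinaryBiproducts C]

/-- `Z` is a summand of `K`: there are maps `r : Z ⟶ K`, `k : K ⟶ Z` with `r ≫ k = 𝟙 Z`. -/
def IsSummand (Z K : C) : Prop := ∃ (r : Z ⟶ K) (k : K ⟶ Z), r ≫ k = 𝟙 Z

/-- The subcategory `ℐ * 𝒥`: objects `K` admitting a distinguished triangle
`K₀ ⟶ K ⟶ K₁ ⟶ K₀⟦1⟧` with `K₀ ∈ ℐ` and `K₁ ∈ 𝒥`. -/
def star (I J : Set C) : Set C :=
  {K | ∃ (K₀ K₁ : C) (f : K₀ ⟶ K) (g : K ⟶ K₁) (h : K₁ ⟶ K₀⟦(1 : ℤ)⟧),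
    Triangle.mk f g h ∈ (distTriang C) ∧ K₀ ∈ I ∧ K₁ ∈ J}

/-- Membership in `[ℐ]`, the smallest strictly full subcategory containing `ℐ` and
closed under finite direct sums and shifts. -/
inductive bracketMem (I : Set C) : C → Prop
  | of {X : C} (hX : X ∈ I) : bracketMem I X
  | zero {X : C} (hX : IsZero X) : bracketMem I X
  | shift {X : C} (n : ℤ) (hX : bracketMem I X) : bracketMem I (X⟦n⟧)
  | sum {X Y : C} (hX : bracketMem I X) (hY : bracketMem I Y) : bracketMem I (X ⊞ Y)
  | iso {X Y : C} (e : X ≅ Y) (hX : bracketMem I X) : bracketMem I Y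

/-- `[ℐ]` as a set of objects. -/
def bracket (I : Set C) : Set C := {X | bracketMem I X}

/-- Membership in `⟨ℐ⟩`, the smallest strictly full subcategory containing `ℐ` and
closed under finite direct sums, shifts, and summands. -/
inductive angleMem (I : Set C) : C → Prop
  | of {X : C} (hX : X ∈ I) : angleMem I X
  | zero {X : C} (hX : IsZero X) : angleMem I X
  | shift {X : C} (n : ℤ) (hX : angleMem I X) : angleMem I (X⟦n⟧)
  | sum {X Y : C} (hX : angleMem I X) (hY : angleMem I Y) : angleMem I (X ⊞ Y)
  | smd {X Y : C} (h : IsSummand X Y) (hY : angleMem I Y) : angleMem I X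
  | iso {X Y : C} (e : X ≅ Y) (hX : angleMem I X) : angleMem I Y

/-- `⟨ℐ⟩` as a set of objects. -/
def angle (I : Set C) : Set C := {X | angleMem I X}

/-- `ℐ_sd`: the smallest strictly full subcategory containing all summands of objects of `ℐ`. -/
def sd (I : Set C) : Set C := {Z | ∃ K ∈ I, IsSummand Z K}

/-- `[ℐ]_n` for `n ≥ 1`: `[ℐ]_1 = [ℐ]`, `[ℐ]_{n+1} = [ℐ]_n * [ℐ]`. (Value `∅` at `n = 0`.) -/
def bracketN (I : Set C) : ℕ → Set C
  | 0 => ∅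
  | 1 => bracket I
  | (n + 2) => star (bracketN I (n + 1)) (bracket I)

/-- `⟨ℐ⟩_n` for `n ≥ 1`: `⟨ℐ⟩_1 = ⟨ℐ⟩`, `⟨ℐ⟩_{n+1} = ⟨⟨ℐ⟩_n * ⟨ℐ⟩⟩`. (Value `∅` at `n = 0`.) -/
def angleN (I : Set C) : ℕ → Set C
  | 0 => ∅
  | 1 => angle I
  | (n + 2) => angle (star (angleN I (n + 1)) (angle I))

/-- `⟨ℐ⟩_∞ = ⋃_{n ∈ ℕ} ⟨ℐ⟩_n`. -/
def angleInf (I : Set C) : Set C := ⋃ n : ℕ, angleN I n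

/-- A full triangulated subcategory: a strictly full subcategory containing the zero
objects, closed under shifts and extensions (hence cones). -/
structure IsTriangulatedSub (S : Set C) : Prop where
  zero : ∀ X : C, IsZero X → X ∈ S
  iso_closed : ∀ {X Y : C}, (X ≅ Y) → X ∈ S → Y ∈ S
  shift : ∀ (X : C) (n : ℤ), X ∈ S → X⟦n⟧ ∈ S
  ext₂ : ∀ (T : Triangle C), T ∈ (distTriang C) → T.obj₁ ∈ S → T.obj₃ ∈ S → T.obj₂ ∈ S

set_option linter.unusedSectionVars false
open ZeroObject

noncomputable instance shiftPreservesBinaryBiproduct (n : ℤ) (X Y : C) :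
    PreservesBinaryBiproduct X Y (shiftFunctor C n) :=
  preservesBinaryBiproduct_of_preservesBiproduct _ _ _
set_option maxHeartbeats 1000000

/-! ### Auxiliary lemmas -/

section Aux

variable {S T : Set C}

lemma angleMem.mono (h : S ⊆ T) {X : C} (hX : angleMem S X) : angleMem T X := by
  induction hX with
  | of hX => exact .of (h hX)
  | zero hX => exact .zero hX
  | shift n _ ih => exact .shift n ih
  | sum _ _ ih1 ih2 => exact .sum ih1 ih2
  | smd hs _ ih => exact .smd hs ih
  | iso e _ ih => exact .iso e ih

lemma angleMem.bind (h : ∀ X ∈ S, angleMem T X) {X : C} (hX : angleMem S X) :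
    angleMem T X := by
  induction hX with
  | of hX => exact h _ hX
  | zero hX => exact .zero hX
  | shift n _ ih => exact .shift n ih
  | sum _ _ ih1 ih2 => exact .sum ih1 ih2
  | smd hs _ ih => exact .smd hs ih
  | iso e _ ih => exact .iso e ih

lemma subset_angle : S ⊆ angle S := fun _ h => .of h

lemma angle_mono (h : S ⊆ T) : angle S ⊆ angle T := fun _ hX => hX.mono h

lemma angle_bind (h : S ⊆ angle T) : angle S ⊆ angle T := fun _ hX => hX.bind h

lemma angle_angle : angle (angle S) = angle S :=
  Set.Subset.antisymm (angle_bind (fun _ h => h)) (angle_mono subset_angle)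

lemma angle_union_subset {S' T' : Set C} (hS : S ⊆ angle S') (hT : T ⊆ angle T') :
    angle (S ∪ T) ⊆ angle (S' ∪ T') :=
  angle_bind (by
    rintro X (h | h)
    · exact (hS h).mono Set.subset_union_left
    · exact (hT h).mono Set.subset_union_right)

lemma angle_union_angle : angle (angle S ∪ angle T) = angle (S ∪ T) :=
  Set.Subset.antisymm (angle_union_subset (fun _ h => h) (fun _ h => h))
    (angle_union_subset (fun _ h => .of (.of h)) (fun _ h => .of (.of h)))

/-! ### summands -/

lemma IsSummand.trans {X Y Z : C} (h : IsSummand X Y) (h' : IsSummand Y Z) :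
    IsSummand X Z := by
  obtain ⟨r, k, hrk⟩ := h
  obtain ⟨r', k', hrk'⟩ := h'
  exact ⟨r ≫ r', k' ≫ k, by rw [assoc, ← assoc r', hrk', id_comp, hrk]⟩

lemma isSummand_of_iso {X Y : C} (e : X ≅ Y) : IsSummand X Y :=
  ⟨e.hom, e.inv, e.hom_inv_id⟩

lemma IsSummand.of_iso_left {X X' Y : C} (e : X' ≅ X) (h : IsSummand X Y) :
    IsSummand X' Y := (isSummand_of_iso e).trans h

lemma IsSummand.of_iso_right {X Y Y' : C} (h : IsSummand X Y) (e : Y ≅ Y') :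
    IsSummand X Y' := h.trans (isSummand_of_iso e)

lemma IsSummand.map {X Y : C} (h : IsSummand X Y) (F : C ⥤ C) :
    IsSummand (F.obj X) (F.obj Y) := by
  obtain ⟨r, k, hrk⟩ := h
  exact ⟨F.map r, F.map k, by rw [← F.map_comp, hrk, F.map_id]⟩

lemma IsSummand.biprod {X Y X' Y' : C} (h : IsSummand X Y) (h' : IsSummand X' Y') :
    IsSummand (X ⊞ X') (Y ⊞ Y') := by
  obtain ⟨r, k, hrk⟩ := h
  obtain ⟨r', k', hrk'⟩ := h'
  refine ⟨biprod.map r r', biprod.map k k', ?_⟩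
  apply biprod.hom_ext <;>
    simp only [assoc, biprod.map_fst, biprod.map_fst_assoc, biprod.map_snd,
      biprod.map_snd_assoc, hrk, hrk', comp_id, id_comp]

lemma isSummand_biprod_left {X W : C} : IsSummand X (X ⊞ W) :=
  ⟨biprod.inl, biprod.fst, biprod.inl_fst⟩

/-- `X ⊞ W ≅ X` when `W` is zero. -/
noncomputable def isoBiprodZero {X W : C} (hW : IsZero W) : X ⊞ W ≅ X where
  hom := biprod.fst
  inv := biprod.lift (𝟙 X) 0
  hom_inv_id := by
    apply biprod.hom_ext
    · simp
    · apply hW.eq_of_tgt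
  inv_hom_id := by simp

/-- shuffling of binary biproducts -/
noncomputable def biprodShuffle (P P' Q Q' : C) : (P ⊞ P') ⊞ (Q ⊞ Q') ≅ (P ⊞ Q) ⊞ (P' ⊞ Q') where
  hom := biprod.lift (biprod.map biprod.fst biprod.fst) (biprod.map biprod.snd biprod.snd)
  inv := biprod.lift (biprod.map biprod.fst biprod.fst) (biprod.map biprod.snd biprod.snd)
  hom_inv_id := by
    apply biprod.hom_ext <;> apply biprod.hom_ext <;>
      apply biprod.hom_ext' <;> apply biprod.hom_ext' <;> simp
  inv_hom_id := by
    apply biprod.hom_ext <;> apply biprod.hom_ext <;>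
      apply biprod.hom_ext' <;> apply biprod.hom_ext' <;> simp

end Aux

/-! ### Hom-orthogonality -/

/-- all maps from objects of `S` to objects of `T` vanish -/
def zHom (S T : Set C) : Prop := ∀ ⦃X⦄, X ∈ S → ∀ ⦃Y⦄, Y ∈ T → ∀ f : X ⟶ Y, f = 0

/-- `S` is closed under shifts -/
def ShiftClosed (S : Set C) : Prop := ∀ ⦃X⦄, X ∈ S → ∀ n : ℤ, X⟦n⟧ ∈ S

section zHom

variable {S T S₀ S₁ T₀ T₁ : Set C}

lemma zHom.angle_right (hS : ShiftClosed S) (h : zHom S T) : zHom S (angle T) := by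
  have main : ∀ Y, angleMem T Y → ∀ X, X ∈ S → ∀ f : X ⟶ Y, f = 0 := by
    intro Y hY
    induction hY with
    | of hY => exact fun X hX f => h hX hY f
    | zero hY => exact fun X hX f => hY.eq_of_tgt f 0
    | @shift Y₀ n _ ih =>
      intro X hX f
      have α : (Y₀⟦n⟧)⟦-n⟧ ≅ Y₀ := (shiftFunctorCompIsoId C n (-n) (add_neg_cancel n)).app Y₀
      have h1 : (shiftFunctor C (-n)).map f ≫ α.hom = 0 :=
        ih _ (hS hX (-n)) _
      have h2 : (shiftFunctor C (-n)).map f = 0 := by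
        rw [← comp_id ((shiftFunctor C (-n)).map f), ← α.hom_inv_id, ← assoc, h1, zero_comp]
      apply (shiftFunctor C (-n)).map_injective
      rw [h2, Functor.map_zero]
    | sum _ _ ihA ihB =>
      intro X hX f
      apply biprod.hom_ext
      · rw [ihA _ hX (f ≫ biprod.fst), zero_comp]
      · rw [ihB _ hX (f ≫ biprod.snd), zero_comp]
    | smd hs _ ih =>
      intro X hX f
      obtain ⟨r, k, hrk⟩ := hs
      rw [← comp_id f, ← hrk, ← assoc, ih _ hX (f ≫ r), zero_comp]
    | iso e _ ih =>
      intro X hX f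
      rw [← comp_id f, ← e.inv_hom_id, ← assoc, ih _ hX (f ≫ e.inv), zero_comp]
  exact fun X hX Y hY f => main Y hY X hX f

lemma zHom.angle_left (hT : ShiftClosed T) (h : zHom S T) : zHom (angle S) T := by
  have main : ∀ X, angleMem S X → ∀ Y, Y ∈ T → ∀ f : X ⟶ Y, f = 0 := by
    intro X hX
    induction hX with
    | of hX => exact fun Y hY f => h hX hY f
    | zero hX => exact fun Y hY f => hX.eq_of_src f 0
    | @shift X₀ n _ ih =>
      intro Y hY f
      have α : (X₀⟦n⟧)⟦-n⟧ ≅ X₀ := (shiftFunctorCompIsoId C n (-n) (add_neg_cancel n)).app X₀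
      have h1 : α.inv ≫ (shiftFunctor C (-n)).map f = 0 :=
        ih _ (hT hY (-n)) _
      have h2 : (shiftFunctor C (-n)).map f = 0 := by
        rw [← id_comp ((shiftFunctor C (-n)).map f), ← α.hom_inv_id, assoc, h1, comp_zero]
      apply (shiftFunctor C (-n)).map_injective
      rw [h2, Functor.map_zero]
    | sum _ _ ihA ihB =>
      intro Y hY f
      apply biprod.hom_ext'
      · rw [ihA _ hY (biprod.inl ≫ f), comp_zero]
      · rw [ihB _ hY (biprod.inr ≫ f), comp_zero]
    | smd hs _ ih =>
      intro Y hY f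
      obtain ⟨r, k, hrk⟩ := hs
      rw [← id_comp f, ← hrk, assoc, ih _ hY (k ≫ f), comp_zero]
    | iso e _ ih =>
      intro Y hY f
      rw [← id_comp f, ← e.inv_hom_id, assoc, ih _ hY (e.hom ≫ f), comp_zero]
  exact fun X hX Y hY f => main X hX Y hY f

lemma zHom.star_right (h₀ : zHom S T₀) (h₁ : zHom S T₁) : zHom S (star T₀ T₁) := by
  rintro X hX K ⟨K₀, K₁, a, b, c, mem, m₀, m₁⟩ f
  have hfb : f ≫ b = 0 := h₁ hX m₁ _
  obtain ⟨g, hg⟩ := Triangle.coyoneda_exact₂ _ mem f hfb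
  rw [hg, h₀ hX m₀ g]; exact zero_comp

lemma zHom.star_left (h₀ : zHom S₀ T) (h₁ : zHom S₁ T) : zHom (star S₀ S₁) T := by
  rintro K ⟨K₀, K₁, a, b, c, mem, m₀, m₁⟩ Y hY f
  have haf : a ≫ f = 0 := h₀ m₀ hY _
  obtain ⟨g, hg⟩ := Triangle.yoneda_exact₂ _ mem f haf
  rw [hg, h₁ m₁ hY g]; exact comp_zero

end zHom

/-! ### basic facts about `angleN` -/

section angleN

variable {S T : Set C}

lemma angleN_two_eq (n : ℕ) : angleN S (n + 2) = angle (star (angleN S (n + 1)) (angle S)) := rfl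

lemma angleN_one_eq : angleN S 1 = angle S := rfl

lemma star_mono {S' T' : Set C} (hS : S ⊆ S') (hT : T ⊆ T') : star S T ⊆ star S' T' := by
  rintro K ⟨K₀, K₁, a, b, c, mem, m₀, m₁⟩
  exact ⟨K₀, K₁, a, b, c, mem, hS m₀, hT m₁⟩

lemma angleN_mono (h : S ⊆ T) : ∀ n, angleN S n ⊆ angleN T n := by
  intro n
  induction n using Nat.strong_induction_on with
  | _ n ih =>
    match n with
    | 0 => exact le_refl _
    | 1 => exact angle_mono h
    | (n + 2) =>
      exact angle_mono (star_mono (ih (n + 1) (by omega)) (angle_mono h))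

lemma angleN_angleClosed {n : ℕ} (hn : 1 ≤ n) {X : C} (hX : angleMem (angleN S n) X) :
    X ∈ angleN S n := by
  match n with
  | 1 => exact angleMem.bind (fun _ h => h) hX
  | (n + 2) => exact angleMem.bind (fun _ h => h) hX

lemma shiftClosed_angleN (n : ℕ) : ShiftClosed (angleN S n) := by
  match n with
  | 0 => exact fun X hX _ => hX.elim
  | 1 => exact fun X hX m => angleMem.shift m hX
  | (n + 2) => exact fun X hX m => angleMem.shift m hX

lemma angleN_succ_mono : ∀ n : ℕ, angleN S n ⊆ angleN S (n + 1) := by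
  intro n
  induction n using Nat.strong_induction_on with
  | _ n ih =>
    match n with
    | 0 => exact fun X hX => hX.elim
    | 1 =>
      intro X hX
      refine angleMem.of ⟨X, 0, 𝟙 X, 0, 0, ?_, hX, angleMem.zero (isZero_zero C)⟩
      exact contractible_distinguished X
    | (n + 2) =>
      exact angle_mono (star_mono (ih (n + 1) (by omega)) (le_refl _))

lemma angleN_le_mono {m n : ℕ} (h : m ≤ n) : angleN S m ⊆ angleN S n := by
  induction h with
  | refl => exact le_refl _
  | step _ ih => exact ih.trans (angleN_succ_mono _)

lemma angleN_subset_angleInf (n : ℕ) : angleN S n ⊆ angleInf S :=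
  Set.subset_iUnion (fun n => angleN S n) n

lemma shiftClosed_angleInf : ShiftClosed (angleInf S) := by
  rintro X hX m
  obtain ⟨_, ⟨n, rfl⟩, hn⟩ := hX
  exact angleN_subset_angleInf n (shiftClosed_angleN n hn m)

lemma shiftClosed_union {S T : Set C} (hS : ShiftClosed S) (hT : ShiftClosed T) :
    ShiftClosed (S ∪ T) := by
  rintro X (hX | hX) m
  · exact Or.inl (hS hX m)
  · exact Or.inr (hT hX m)

/-- orthogonality passes to the triangulated-angle closures -/
lemma zHom.closure (hS : ShiftClosed S) (hT : ShiftClosed T) (h : zHom S T) :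
    zHom (angleInf S) (angleInf T) := by
  have hTn : ∀ n, zHom S (angleN T n) := by
    intro n
    induction n using Nat.strong_induction_on with
    | _ n ih =>
      match n with
      | 0 => exact fun X hX Y hY => hY.elim
      | 1 => exact h.angle_right hS
      | (n + 2) =>
        exact ((ih (n + 1) (by omega)).star_right (h.angle_right hS)).angle_right hS
  have hTinf : zHom S (angleInf T) := by
    rintro X hX Y ⟨_, ⟨n, rfl⟩, hY⟩ f
    exact hTn n hX hY f
  have hSn : ∀ n, zHom (angleN S n) (angleInf T) := by
    intro n
    induction n using Nat.strong_induction_on with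
    | _ n ih =>
      match n with
      | 0 => exact fun X hX => hX.elim
      | 1 => exact hTinf.angle_left shiftClosed_angleInf
      | (n + 2) =>
        exact (((ih (n + 1) (by omega)).star_left
          (hTinf.angle_left shiftClosed_angleInf)).angle_left shiftClosed_angleInf)
  rintro X ⟨_, ⟨n, rfl⟩, hX⟩ Y hY f
  exact hSn n hX hY f

/-! ### the empty case -/

lemma isZero_of_angleMem_empty {X : C} (hX : angleMem (∅ : Set C) X) : IsZero X := by
  induction hX with
  | of hX => exact hX.elim
  | zero hX => exact hX
  | @shift X₀ n _ ih =>
    rw [IsZero.iff_id_eq_zero] at ih ⊢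
    calc 𝟙 (X₀⟦n⟧) = (shiftFunctor C n).map (𝟙 X₀) := ((shiftFunctor C n).map_id X₀).symm
    _ = 0 := by rw [ih]; exact (shiftFunctor C n).map_zero _ _
  | sum _ _ ih1 ih2 =>
    rw [IsZero.iff_id_eq_zero]
    apply biprod.hom_ext
    · rw [id_comp, ih1.eq_of_tgt biprod.fst 0, zero_comp]
    · rw [id_comp, ih2.eq_of_tgt biprod.snd 0, zero_comp]
  | smd hs _ ih =>
    obtain ⟨r, k, hrk⟩ := hs
    rw [IsZero.iff_id_eq_zero, ← hrk, ih.eq_of_tgt r 0, zero_comp]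
  | iso e _ ih => exact ih.of_iso e.symm

lemma angleN_empty_subset : ∀ n, angleN (∅ : Set C) n ⊆ angle (∅ : Set C) := by
  intro n
  induction n using Nat.strong_induction_on with
  | _ n ih =>
    match n with
    | 0 => exact fun X hX => hX.elim
    | 1 => exact le_refl _
    | (n + 2) =>
      apply angle_bind
      rintro K ⟨K₀, K₁, a, b, c, mem, m₀, m₁⟩
      have h₀ : IsZero K₀ := isZero_of_angleMem_empty (ih (n + 1) (by omega) m₀)
      have h₁ : IsZero K₁ := isZero_of_angleMem_empty m₁
      exact angleMem.zero ((Triangle.mk a b c).isZero₂_of_isZero₁₃ mem h₀ h₁)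

lemma angleN_empty {n : ℕ} (hn : 1 ≤ n) : angleN (∅ : Set C) n = angle (∅ : Set C) := by
  apply Set.Subset.antisymm (angleN_empty_subset n)
  intro X hX
  have hz : IsZero X := isZero_of_angleMem_empty hX
  match n with
  | 1 => exact angleMem.zero hz
  | (n + 2) => exact angleMem.zero hz

end angleN

/-! ### direct sums of distinguished triangles -/

section Triangles

/-- translation between products over `WalkingPair` and binary biproducts -/
noncomputable def piPairIso (f : WalkingPair → C) [HasProduct f] :
    (∏ᶜ f) ≅ f WalkingPair.left ⊞ f WalkingPair.right where
  hom := biprod.lift (Pi.π f WalkingPair.left) (Pi.π f WalkingPair.right)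
  inv := Pi.lift (fun j => WalkingPair.casesOn j biprod.fst biprod.snd)
  hom_inv_id := by
    apply Pi.hom_ext
    rintro (_ | _) <;> simp
  inv_hom_id := by apply biprod.hom_ext <;> simp

/-- The direct sum of two distinguished triangles is distinguished. -/
lemma sum_distinguished {X₁ Y₁ Z₁ X₂ Y₂ Z₂ : C}
    (f₁ : X₁ ⟶ Y₁) (g₁ : Y₁ ⟶ Z₁) (h₁ : Z₁ ⟶ X₁⟦(1 : ℤ)⟧)
    (f₂ : X₂ ⟶ Y₂) (g₂ : Y₂ ⟶ Z₂) (h₂ : Z₂ ⟶ X₂⟦(1 : ℤ)⟧)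
    (m₁ : Triangle.mk f₁ g₁ h₁ ∈ distTriang C) (m₂ : Triangle.mk f₂ g₂ h₂ ∈ distTriang C) :
    Triangle.mk (biprod.map f₁ f₂) (biprod.map g₁ g₂)
      (biprod.map h₁ h₂ ≫ ((shiftFunctor C (1 : ℤ)).mapBiprod X₁ X₂).inv) ∈ distTriang C := by
  let T : WalkingPair → Triangle C :=
    fun j => WalkingPair.casesOn j (Triangle.mk' X₁ Y₁ Z₁ f₁ g₁ h₁) (Triangle.mk' X₂ Y₂ Z₂ f₂ g₂ h₂)
  have hT : ∀ j, T j ∈ distTriang C := by rintro (_ | _) <;> assumption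
  have mem := productTriangle_distinguished T hT
  show Triangle.mk' (X₁ ⊞ X₂) (Y₁ ⊞ Y₂) (Z₁ ⊞ Z₂) (biprod.map f₁ f₂) (biprod.map g₁ g₂)
    (biprod.map h₁ h₂ ≫ ((shiftFunctor C (1 : ℤ)).mapBiprod X₁ X₂).inv) ∈ distTriang C
  have mem' : Triangle.mk' (∏ᶜ fun j => (T j).obj₁) (∏ᶜ fun j => (T j).obj₂)
      (∏ᶜ fun j => (T j).obj₃) (Limits.Pi.map fun j => (T j).mor₁)
      (Limits.Pi.map fun j => (T j).mor₂)
      (Limits.Pi.map (fun j => (T j).mor₃) ≫ inv (piComparison (shiftFunctor C (1 : ℤ)) _))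
      ∈ distTriang C := mem
  refine isomorphic_distinguished _ mem' _ (Iso.symm ?_)
  refine Triangle.isoMk _ _ (piPairIso (fun j => (T j).obj₁)) (piPairIso (fun j => (T j).obj₂))
    (piPairIso (fun j => (T j).obj₃)) ?_ ?_ ?_
  · apply biprod.hom_ext
    · simp [piPairIso, T]
    · simp [piPairIso, T]
  · apply biprod.hom_ext
    · simp [piPairIso, T]
    · simp [piPairIso, T]
  · rw [← cancel_mono (((shiftFunctor C (1 : ℤ)).mapBiprod X₁ X₂).hom)]
    apply biprod.hom_ext
    · simp only [T, piPairIso, productTriangle, Triangle.mk_mor₃, Triangle.mk_obj₁,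
        Triangle.mk_obj₃, assoc]
      rw [Iso.inv_hom_id_assoc]
      rw [biprod.map_fst]
      rw [biprod.lift_fst_assoc]
      rw [Functor.mapBiprod_hom]
      rw [biprod.lift_fst]
      rw [← Functor.map_comp]
      rw [biprod.lift_fst]
      rw [← piComparison_comp_π, IsIso.inv_hom_id_assoc]
      exact Pi.map_π _ _
    · simp only [T, piPairIso, productTriangle, Triangle.mk_mor₃, Triangle.mk_obj₁,
        Triangle.mk_obj₃, assoc]
      rw [Iso.inv_hom_id_assoc]
      rw [biprod.map_snd]
      rw [biprod.lift_snd_assoc]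
      rw [Functor.mapBiprod_hom]
      rw [biprod.lift_snd]
      rw [← Functor.map_comp]
      rw [biprod.lift_snd]
      rw [← piComparison_comp_π, IsIso.inv_hom_id_assoc]
      exact Pi.map_π _ _

end Triangles

/-! ### more triangle tools -/

section MoreTriangles

/-- conjugating a distinguished triangle by isomorphisms -/
lemma dist_conj (T : Triangle C) (hT : T ∈ distTriang C) {P M Q : C}
    (i₁ : T.obj₁ ≅ P) (i₂ : T.obj₂ ≅ M) (i₃ : T.obj₃ ≅ Q) :
    Triangle.mk (i₁.inv ≫ T.mor₁ ≫ i₂.hom) (i₂.inv ≫ T.mor₂ ≫ i₃.hom)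
      (i₃.inv ≫ T.mor₃ ≫ i₁.hom⟦(1 : ℤ)⟧') ∈ distTriang C := by
  refine isomorphic_distinguished _ hT _ ?_
  refine Triangle.isoMk _ _ i₁.symm i₂.symm i₃.symm ?_ ?_ ?_
  · dsimp [Triangle.mk]; simp
  · dsimp [Triangle.mk]; simp
  · dsimp [Triangle.mk]
    rw [assoc, assoc, ← Functor.map_comp, i₁.hom_inv_id]
    simp only [CategoryTheory.Functor.map_id, comp_id]

/-- two distinguished triangles with the same `mor₃` have isomorphic middle objects -/
lemma iso_obj₂_of_same_mor₃ {P Q M M' : C} {f : P ⟶ M} {g : M ⟶ Q} {f' : P ⟶ M'} {g' : M' ⟶ Q}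
    {V : Q ⟶ P⟦(1 : ℤ)⟧} (hT : Triangle.mk f g V ∈ distTriang C)
    (hT' : Triangle.mk f' g' V ∈ distTriang C) : Nonempty (M ≅ M') := by
  obtain ⟨b, hb₁, hb₂⟩ := complete_distinguished_triangle_morphism₂ _ _ hT hT' (𝟙 P) (𝟙 Q)
    (by dsimp [Triangle.mk]; simp only [CategoryTheory.Functor.map_id, comp_id, id_comp])
  let φ : Triangle.mk f g V ⟶ Triangle.mk f' g' V :=
    { hom₁ := 𝟙 P
      hom₂ := b
      hom₃ := 𝟙 Q
      comm₁ := hb₁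
      comm₂ := hb₂
      comm₃ := by dsimp [Triangle.mk]; simp only [CategoryTheory.Functor.map_id, comp_id, id_comp] }
  have : IsIso φ.hom₂ := isIso₂_of_isIso₁₃ φ hT hT'
    (by dsimp [φ, Triangle.mk]; infer_instance) (by dsimp [φ, Triangle.mk]; infer_instance)
  exact ⟨@asIso _ _ _ _ φ.hom₂ this⟩

/-- a summand in a pretriangulated category admits a complement -/
lemma exists_complement {Z K : C} (h : IsSummand Z K) :
    ∃ (W : C), Nonempty (K ≅ Z ⊞ W) := by
  obtain ⟨r, p, hrp⟩ := h
  obtain ⟨W, g, δ, mem⟩ := distinguished_cocone_triangle r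
  have h0 : δ ≫ r⟦(1 : ℤ)⟧' = 0 := comp_distTriang_mor_zero₃₁ _ mem
  have hδ : δ = 0 := by
    have : δ ≫ r⟦(1 : ℤ)⟧' ≫ p⟦(1 : ℤ)⟧' = δ := by
      rw [← Functor.map_comp, hrp]
      simp only [CategoryTheory.Functor.map_id, comp_id]
    rw [← this, ← assoc, h0, zero_comp]
  obtain ⟨e, _, _⟩ := exists_iso_binaryBiproduct_of_distTriang _ mem hδ
  exact ⟨W, ⟨e⟩⟩

end MoreTriangles

/-! ### decomposition of objects of `angle (A ∪ A')` -/

section Decomp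

lemma exists_summand_decomp {A A' : Set C}
    (hA : ∀ ⦃X⦄, angleMem A X → X ∈ A) (hA' : ∀ ⦃X⦄, angleMem A' X → X ∈ A')
    {X : C} (hX : angleMem (A ∪ A') X) :
    ∃ P, P ∈ A ∧ ∃ P', P' ∈ A' ∧ IsSummand X (P ⊞ P') := by
  induction hX with
  | of hX =>
    rcases hX with hX | hX
    · exact ⟨_, hX, 0, hA' (angleMem.zero (isZero_zero C)), isSummand_biprod_left⟩
    · exact ⟨0, hA (angleMem.zero (isZero_zero C)), _, hX,
        ⟨biprod.inr, biprod.snd, biprod.inr_snd⟩⟩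
  | zero hX =>
    exact ⟨0, hA (angleMem.zero (isZero_zero C)), 0, hA' (angleMem.zero (isZero_zero C)),
      0, 0, by rw [zero_comp]; exact hX.eq_of_src 0 (𝟙 _)⟩
  | shift n _ ih =>
    obtain ⟨P, hP, P', hP', hs⟩ := ih
    refine ⟨P⟦n⟧, hA (angleMem.shift n (angleMem.of hP)), P'⟦n⟧,
      hA' (angleMem.shift n (angleMem.of hP')), ?_⟩
    exact (hs.map (shiftFunctor C n)).of_iso_right ((shiftFunctor C n).mapBiprod P P')
  | sum _ _ ih1 ih2 =>
    obtain ⟨P, hP, P', hP', hs⟩ := ih1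
    obtain ⟨Q, hQ, Q', hQ', hs'⟩ := ih2
    refine ⟨P ⊞ Q, hA (angleMem.sum (.of hP) (.of hQ)), P' ⊞ Q',
      hA' (angleMem.sum (.of hP') (.of hQ')), ?_⟩
    exact (hs.biprod hs').of_iso_right (biprodShuffle P P' Q Q')
  | smd h _ ih =>
    obtain ⟨P, hP, P', hP', hs⟩ := ih
    exact ⟨P, hP, P', hP', h.trans hs⟩
  | iso e _ ih =>
    obtain ⟨P, hP, P', hP', hs⟩ := ih
    exact ⟨P, hP, P', hP', hs.of_iso_left e.symm⟩

end Decomp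

/-! ### the key splitting of an extension along a diagonal connecting map -/

section Core

lemma star_step {X X' Y Y' Mb : C} (a : X ⊞ X' ⟶ Mb) (b : Mb ⟶ Y ⊞ Y')
    (V : Y ⊞ Y' ⟶ (X ⊞ X')⟦(1 : ℤ)⟧)
    (hBig : Triangle.mk a b V ∈ distTriang C)
    (hc₁ : biprod.inl ≫ V ≫ ((shiftFunctor C (1 : ℤ)).mapBiprod X X').hom ≫ biprod.snd = 0)
    (hc₂ : biprod.inr ≫ V ≫ ((shiftFunctor C (1 : ℤ)).mapBiprod X X').hom ≫ biprod.fst = 0) :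
    ∃ (M₁ M₂ : C) (f₁ : X ⟶ M₁) (g₁ : M₁ ⟶ Y) (v₁ : Y ⟶ X⟦(1 : ℤ)⟧)
      (f₂ : X' ⟶ M₂) (g₂ : M₂ ⟶ Y') (v₂ : Y' ⟶ X'⟦(1 : ℤ)⟧),
      (Triangle.mk f₁ g₁ v₁ ∈ distTriang C) ∧ (Triangle.mk f₂ g₂ v₂ ∈ distTriang C) ∧
      Nonempty (Mb ≅ M₁ ⊞ M₂) := by
  have hV : V = biprod.map
      (biprod.inl ≫ V ≫ ((shiftFunctor C (1 : ℤ)).mapBiprod X X').hom ≫ biprod.fst)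
      (biprod.inr ≫ V ≫ ((shiftFunctor C (1 : ℤ)).mapBiprod X X').hom ≫ biprod.snd) ≫
      ((shiftFunctor C (1 : ℤ)).mapBiprod X X').inv := by
    rw [Iso.eq_comp_inv]
    apply biprod.hom_ext'
    · apply biprod.hom_ext
      · simp
        exact congrArg (biprod.inl ≫ ·) (assoc _ _ _)
      · simp only [assoc]
        rw [hc₁]
        simp
    · apply biprod.hom_ext
      · simp only [assoc]
        rw [hc₂]
        simp
      · simp
        exact congrArg (biprod.inr ≫ ·) (assoc _ _ _)
  obtain ⟨M₁, f₁, g₁, hT₁⟩ := distinguished_cocone_triangle₂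
    (biprod.inl ≫ V ≫ ((shiftFunctor C (1 : ℤ)).mapBiprod X X').hom ≫ biprod.fst)
  obtain ⟨M₂, f₂, g₂, hT₂⟩ := distinguished_cocone_triangle₂
    (biprod.inr ≫ V ≫ ((shiftFunctor C (1 : ℤ)).mapBiprod X X').hom ≫ biprod.snd)
  have hSum := sum_distinguished _ _ _ _ _ _ hT₁ hT₂
  rw [hV] at hBig
  obtain ⟨e⟩ := iso_obj₂_of_same_mor₃ hBig hSum
  exact ⟨M₁, M₂, f₁, g₁, _, f₂, g₂, _, hT₁, hT₂, ⟨e⟩⟩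

lemma star_angle_union_subset {A A' B B' : Set C}
    (hA : ∀ ⦃X⦄, angleMem A X → X ∈ A) (hA' : ∀ ⦃X⦄, angleMem A' X → X ∈ A')
    (hB : ∀ ⦃X⦄, angleMem B X → X ∈ B) (hB' : ∀ ⦃X⦄, angleMem B' X → X ∈ B')
    (hBA' : ∀ ⦃Y⦄, Y ∈ B → ∀ ⦃P⦄, P ∈ A' → ∀ f : Y ⟶ P⟦(1 : ℤ)⟧, f = 0)
    (hB'A : ∀ ⦃Y⦄, Y ∈ B' → ∀ ⦃P⦄, P ∈ A → ∀ f : Y ⟶ P⟦(1 : ℤ)⟧, f = 0) :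
    star (angle (A ∪ A')) (angle (B ∪ B')) ⊆ angle (star A B ∪ star A' B') := by
  rintro K ⟨K₀, K₁, f, g, w, hT, h₀, h₁⟩
  obtain ⟨X, hX, X', hX', s₀⟩ := exists_summand_decomp hA hA' h₀
  obtain ⟨Y, hY, Y', hY', s₁⟩ := exists_summand_decomp hB hB' h₁
  obtain ⟨W₀, ⟨e₀⟩⟩ := exists_complement s₀
  obtain ⟨W₁, ⟨e₁⟩⟩ := exists_complement s₁
  -- build the big triangle (X ⊞ X', (K ⊞ W₀) ⊞ W₁, Y ⊞ Y')
  have hS1 := sum_distinguished f g w (𝟙 W₀) (0 : W₀ ⟶ (0 : C)) 0 hT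
    (contractible_distinguished W₀)
  have hS2 := sum_distinguished _ _ _ (0 : (0 : C) ⟶ W₁) (𝟙 W₁) 0 hS1
    (contractible_distinguished₁ W₁)
  have hBig := dist_conj _ hS2
    (show ((K₀ ⊞ W₀) ⊞ (0 : C) : C) ≅ X ⊞ X' from isoBiprodZero (isZero_zero C) ≪≫ e₀.symm)
    (Iso.refl ((K ⊞ W₀) ⊞ W₁))
    (show ((K₁ ⊞ (0 : C)) ⊞ W₁ : C) ≅ Y ⊞ Y' from
      biprod.mapIso (isoBiprodZero (isZero_zero C)) (Iso.refl W₁) ≪≫ e₁.symm)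
  obtain ⟨M₁, M₂, f₁, g₁, v₁, f₂, g₂, v₂, hT₁, hT₂, ⟨e⟩⟩ :=
    star_step _ _ _ hBig (hBA' hY hX' _) (hB'A hY' hX _)
  have hM₁ : M₁ ∈ star A B := ⟨X, Y, f₁, g₁, v₁, hT₁, hX, hY⟩
  have hM₂ : M₂ ∈ star A' B' := ⟨X', Y', f₂, g₂, v₂, hT₂, hX', hY'⟩
  have hMb : angleMem (star A B ∪ star A' B') ((K ⊞ W₀) ⊞ W₁) :=
    angleMem.iso e.symm (angleMem.sum (.of (Or.inl hM₁)) (.of (Or.inr hM₂)))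
  exact angleMem.smd ⟨biprod.inl ≫ biprod.inl, biprod.fst ≫ biprod.fst, by simp⟩ hMb

end Core

/-! ### the binary version of the main statement -/

section Binary

lemma angle_angleN_union_subset {U V : Set C} {n : ℕ} (hn : 1 ≤ n) :
    angle (angleN U n ∪ angleN V n) ⊆ angleN (U ∪ V) n := by
  intro X hX
  apply angleN_angleClosed hn
  refine hX.mono ?_
  apply Set.union_subset
  · exact angleN_mono Set.subset_union_left n
  · exact angleN_mono Set.subset_union_right n

lemma binary_union (U V : Set C)
    (h1 : zHom (angleInf U) (angleInf V)) (h2 : zHom (angleInf V) (angleInf U)) :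
    ∀ n : ℕ, 1 ≤ n → angleN (U ∪ V) n = angle (angleN U n ∪ angleN V n) := by
  intro n
  induction n using Nat.strong_induction_on with
  | _ n ih =>
    intro hn
    match n with
    | 1 => exact angle_union_angle.symm
    | (n + 2) =>
      have IH := ih (n + 1) (by omega) (by omega)
      apply Set.Subset.antisymm
      · rw [angleN_two_eq]
        apply angle_bind
        intro K hK
        rw [IH, ← angle_union_angle (S := U) (T := V)] at hK
        have hK' := star_angle_union_subset
          (A := angleN U (n + 1)) (A' := angleN V (n + 1)) (B := angle U) (B' := angle V)
          (fun X hX => angleN_angleClosed (by omega) hX)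
          (fun X hX => angleN_angleClosed (by omega) hX)
          (fun X hX => angleMem.bind (fun _ h => h) hX)
          (fun X hX => angleMem.bind (fun _ h => h) hX)
          (fun Y hY P hP f => h1 (angleN_subset_angleInf 1 hY)
            (shiftClosed_angleInf (angleN_subset_angleInf (n + 1) hP) 1) f)
          (fun Y hY P hP f => h2 (angleN_subset_angleInf 1 hY)
            (shiftClosed_angleInf (angleN_subset_angleInf (n + 1) hP) 1) f)
          hK
        exact angle_union_subset (fun _ h => .of (angleMem.of h)) (fun _ h => .of (angleMem.of h))
          hK'
      · exact angle_angleN_union_subset (by omega)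

end Binary

/-! ### the `Fin r` version -/

section Multi

lemma iUnion_fin_succ {r : ℕ} (f : Fin (r + 1) → Set C) :
    (⋃ k, f k) = (⋃ k : Fin r, f k.castSucc) ∪ f (Fin.last r) := by
  ext x
  simp only [Set.mem_iUnion, Set.mem_union, Fin.exists_fin_succ']

lemma angle_union_angle_right {S T : Set C} : angle (S ∪ angle T) = angle (S ∪ T) :=
  Set.Subset.antisymm (angle_union_subset (fun _ h => .of h) (fun _ h => h))
    (angle_union_subset (fun _ h => .of h) (fun _ h => .of (.of h)))

lemma angle_union_angle_left {S T : Set C} : angle (angle S ∪ T) = angle (S ∪ T) :=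
  Set.Subset.antisymm (angle_union_subset (fun _ h => h) (fun _ h => .of h))
    (angle_union_subset (fun _ h => .of (.of h)) (fun _ h => .of h))

lemma multi_union (r : ℕ) (I : Fin r → Set C) (hshift : ∀ k, ShiftClosed (I k))
    (horth : ∀ k l, k ≠ l → zHom (I k) (I l)) :
    ∀ n, 1 ≤ n → angleN (⋃ k, I k) n = angle (⋃ k, angleN (I k) n) := by
  induction r with
  | zero =>
    intro n hn
    rw [Set.iUnion_of_empty, Set.iUnion_of_empty, angleN_empty hn]
  | succ r ih =>
    intro n hn
    have hVshift : ShiftClosed (⋃ k : Fin r, I k.castSucc) := by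
      rintro X hX m
      rw [Set.mem_iUnion] at hX ⊢
      obtain ⟨k, hk⟩ := hX
      exact ⟨k, hshift k.castSucc hk m⟩
    have hzVU : zHom (⋃ k : Fin r, I k.castSucc) (I (Fin.last r)) := by
      rintro X hX Y hY f
      rw [Set.mem_iUnion] at hX
      obtain ⟨k, hk⟩ := hX
      exact horth k.castSucc (Fin.last r) (Fin.castSucc_lt_last k).ne hk hY f
    have hzUV : zHom (I (Fin.last r)) (⋃ k : Fin r, I k.castSucc) := by
      rintro X hX Y hY f
      rw [Set.mem_iUnion] at hY
      obtain ⟨k, hk⟩ := hY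
      exact horth (Fin.last r) k.castSucc (Fin.castSucc_lt_last k).ne.symm hX hk f
    have hbin := binary_union (⋃ k : Fin r, I k.castSucc) (I (Fin.last r))
      (hzVU.closure hVshift (hshift _)) (hzUV.closure (hshift _) hVshift) n hn
    have hih := ih (fun k => I k.castSucc) (fun k => hshift k.castSucc)
      (fun k l hkl => horth k.castSucc l.castSucc (by
        simpa [Fin.castSucc_inj] using hkl)) n hn
    rw [iUnion_fin_succ I, hbin, hih, angle_union_angle_left,
      ← iUnion_fin_succ (fun k => angleN (I k) n)]

end Multi

/-- Let `ℐ_1, …, ℐ_r` be mutually orthogonal full triangulated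
subcategories. Then for every `n ∈ ℕ ∪ {∞}` one has
`⟨ℐ_1 ∪ ⋯ ∪ ℐ_r⟩_n = ⟨⟨ℐ_1⟩_n ∪ ⋯ ∪ ⟨ℐ_r⟩_n⟩`. -/
theorem angleN_iUnion_of_orthogonal (r : ℕ) (I : Fin r → Set C)
    (hI : ∀ k, IsTriangulatedSub (I k))
    (horth : ∀ k l, k ≠ l → ∀ (K L : C), K ∈ I k → L ∈ I l → ∀ f : K ⟶ L, f = 0) :
    (∀ n : ℕ, 1 ≤ n → angleN (⋃ k, I k) n = angle (⋃ k, angleN (I k) n)) ∧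
    angleInf (⋃ k, I k) = angle (⋃ k, angleInf (I k)) := by
  have hshift : ∀ k, ShiftClosed (I k) := fun k X hX n => (hI k).shift X n hX
  have horth' : ∀ k l, k ≠ l → zHom (I k) (I l) :=
    fun k l h X hX Y hY f => horth k l h X Y hX hY f
  have main := multi_union r I hshift horth'
  refine ⟨main, ?_⟩
  apply Set.Subset.antisymm
  · intro X hX
    obtain ⟨n, hn⟩ := Set.mem_iUnion.1 hX
    match n with
    | 0 => exact hn.elim
    | (n + 1) =>
      rw [main (n + 1) (by omega)] at hn
      exact hn.mono (Set.iUnion_mono (fun k => angleN_subset_angleInf (n + 1)))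
  · intro X hX
    have hEx : ∃ N, 1 ≤ N ∧ angleMem (⋃ k, angleN (I k) N) X := by
      induction hX with
      | of h =>
        obtain ⟨k, hk⟩ := Set.mem_iUnion.1 h
        obtain ⟨n, hn⟩ := Set.mem_iUnion.1 hk
        refine ⟨max n 1, le_max_right _ _, .of ?_⟩
        exact Set.mem_iUnion.2 ⟨k, angleN_le_mono (le_max_left _ _) hn⟩
      | zero h => exact ⟨1, le_refl _, .zero h⟩
      | shift n _ ih =>
        obtain ⟨N, hN, h⟩ := ih
        exact ⟨N, hN, .shift n h⟩
      | sum _ _ ih1 ih2 =>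
        obtain ⟨N₁, hN₁, h₁⟩ := ih1
        obtain ⟨N₂, hN₂, h₂⟩ := ih2
        refine ⟨max N₁ N₂, le_trans hN₁ (le_max_left _ _), .sum (h₁.mono ?_) (h₂.mono ?_)⟩
        · exact Set.iUnion_mono fun k => angleN_le_mono (le_max_left _ _)
        · exact Set.iUnion_mono fun k => angleN_le_mono (le_max_right _ _)
      | smd hs _ ih =>
        obtain ⟨N, hN, h⟩ := ih
        exact ⟨N, hN, .smd hs h⟩
      | iso e _ ih =>
        obtain ⟨N, hN, h⟩ := ih
        exact ⟨N, hN, .iso e h⟩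
    obtain ⟨N, hN, h⟩ := hEx
    have hXN : X ∈ angleN (⋃ k, I k) N := by rw [main N hN]; exact h
    exact Set.mem_iUnion.2 ⟨N, hXN⟩

end RouquierDim
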